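/- With the notation above, at a point x_k of positive absolute maximum of f_k = (f - f(x₀) + 1)·ψ^{-1/k}, for every tangent vector X one has Hess f(x_k)(X, X) ≤ ((f(x_k) - f(x₀) + 1)/(k ψ(x_k))) · (Hess ψ(x_k)(X, X) + ((1/k) - 1)·(dψ(X))²/ψ(x_k)), and in particular Hess f(x_k)(X, X) ≤ ((f(x_k) - f(x₀) + 1)/(k ψ(x_k))) · Hess ψ(x_k)(X, X) when dψ(X) ≠ 0 is allowed since (1/k - 1) ≤ 0. -/

import Mathlib

open Real Set Filter

section helpers
variable {E : Type*} [NormedAddCommGroup E] [NormedSpace ℝ E]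

lemma hasDerivAt_line_aux (x X : E) (t : ℝ) :
    HasDerivAt (fun s : ℝ => x + s • X) X t := by
  have : HasDerivAt (fun s : ℝ => x + s • X) ((1:ℝ) • X) t :=
    ((hasDerivAt_id t).smul_const X).const_add x
  rwa [one_smul] at this

lemma hasDerivAt_line {g : E → ℝ} (hg : ContDiff ℝ 2 g) (x X : E) (t : ℝ) :
    HasDerivAt (fun s : ℝ => g (x + s • X)) (fderiv ℝ g (x + t • X) X) t := by
  have hdiff : Differentiable ℝ g := hg.differentiable (by norm_num)
  exact (hdiff (x + t • X)).hasFDerivAt.comp_hasDerivAt t (hasDerivAt_line_aux x X t)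

lemma hasDerivAt_line2 {g : E → ℝ} (hg : ContDiff ℝ 2 g) (x X : E) :
    HasDerivAt (fun s : ℝ => fderiv ℝ g (x + s • X) X)
      (iteratedFDeriv ℝ 2 g x ![X, X]) 0 := by
  have hF1 : ContDiff ℝ 1 (fderiv ℝ g) := hg.fderiv_right (by norm_num)
  have hFd : Differentiable ℝ (fderiv ℝ g) := hF1.differentiable one_ne_zero
  have hx0 : x + (0:ℝ) • X = x := by simp
  have hc : HasDerivAt (fun s : ℝ => fderiv ℝ g (x + s • X))
      (fderiv ℝ (fderiv ℝ g) x X) 0 := by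
    have h1 : HasFDerivAt (fderiv ℝ g) (fderiv ℝ (fderiv ℝ g) x) (x + (0:ℝ) • X) := by
      rw [hx0]; exact (hFd x).hasFDerivAt
    exact h1.comp_hasDerivAt 0 (hasDerivAt_line_aux x X 0)
  have happ := hc.clm_apply (hasDerivAt_const (0:ℝ) X)
  rw [iteratedFDeriv_two_apply]
  simp only [Matrix.cons_val_zero, Matrix.cons_val_one, Matrix.head_cons]
  convert happ using 1
  all_goals first | rfl | simp

lemma second_deriv_test {h h' : ℝ → ℝ} {h'' : ℝ} {s : Set ℝ}
    (hs : s ∈ nhds (0:ℝ))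
    (hd : ∀ t ∈ s, HasDerivAt h (h' t) t)
    (hd2 : HasDerivAt h' h'' 0)
    (hm : ∀ t ∈ s, h t ≤ h 0) :
    h' 0 = 0 ∧ h'' ≤ 0 := by
  have h0mem : (0:ℝ) ∈ s := mem_of_mem_nhds hs
  have hlmax : IsLocalMax h 0 := Filter.eventually_of_mem hs hm
  have h'0 : h' 0 = 0 := hlmax.hasDerivAt_eq_zero (hd 0 h0mem)
  refine ⟨h'0, ?_⟩
  by_contra hcon
  push_neg at hcon
  have hslope : Tendsto (slope h' 0) (nhdsWithin 0 {(0:ℝ)}ᶜ) (nhds h'') :=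
    hasDerivAt_iff_tendsto_slope.1 hd2
  have hev : ∀ᶠ t in nhdsWithin 0 (Ioi (0:ℝ)), 0 < slope h' 0 t :=
    (hslope.mono_left (nhdsWithin_mono 0 (fun t ht => ne_of_gt ht))).eventually
      (eventually_gt_nhds hcon)
  have hev2 : ∀ᶠ t in nhdsWithin 0 (Ioi (0:ℝ)), 0 < slope h' 0 t ∧ t ∈ s :=
    hev.and (mem_nhdsWithin_of_mem_nhds hs)
  obtain ⟨ε, hε, hsub⟩ := mem_nhdsGT_iff_exists_Ioo_subset.1 hev2
  obtain ⟨δ, hδ, hball⟩ := Metric.mem_nhds_iff.1 hs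
  set ε' := min (ε/2) (δ/2) with hε'def
  have hε'pos : 0 < ε' := lt_min (by linarith [mem_Ioi.1 hε]) (by linarith)
  have hIccs : Icc (0:ℝ) ε' ⊆ s := by
    intro t ht
    apply hball
    simp only [Metric.mem_ball, Real.dist_eq, sub_zero]
    rw [abs_of_nonneg ht.1]
    calc t ≤ ε' := ht.2
    _ ≤ δ/2 := min_le_right _ _
    _ < δ := by linarith
  have hIoosub : Ioo (0:ℝ) ε' ⊆ Ioo 0 ε := by
    intro t ht
    exact ⟨ht.1, lt_of_lt_of_le ht.2 ((min_le_left _ _).trans (by linarith [mem_Ioi.1 hε]))⟩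
  have hmono : StrictMonoOn h (Icc 0 ε') := by
    apply strictMonoOn_of_deriv_pos (convex_Icc 0 ε')
    · intro t ht
      exact ((hd t (hIccs ht)).continuousAt).continuousWithinAt
    · intro t ht
      rw [interior_Icc] at ht
      have hts : t ∈ s := hIccs ⟨le_of_lt ht.1, le_of_lt ht.2⟩
      rw [(hd t hts).deriv]
      have hsl := (hsub (hIoosub ht)).1
      rw [slope_def_field, h'0, sub_zero, sub_zero] at hsl
      have := mul_pos hsl ht.1
      rwa [div_mul_cancel₀ _ (ne_of_gt ht.1)] at this
  have : h 0 < h ε' :=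
    hmono (left_mem_Icc.2 (le_of_lt hε'pos)) (right_mem_Icc.2 (le_of_lt hε'pos)) hε'pos
  exact absurd (hm ε' (hIccs (right_mem_Icc.2 (le_of_lt hε'pos)))) (not_le.2 this)

end helpers

/-- Second-order condition at a positive maximum of `f_k = (f - f x₀ + 1) · ψ^{-1/k}`. -/
theorem hess_at_max_of_quotient
    {E : Type*} [NormedAddCommGroup E] [InnerProductSpace ℝ E] [CompleteSpace E]
    (f ψ : E → ℝ) (hf : ContDiff ℝ 2 f) (hψ : ContDiff ℝ 2 ψ)
    (hψpos : ∀ x, 0 < ψ x) (x₀ : E) (k : ℕ) (hk : 1 ≤ k) (xk : E)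
    (hmax : ∀ x, (f x - f x₀ + 1) / (ψ x ^ ((1:ℝ)/k)) ≤
      (f xk - f x₀ + 1) / (ψ xk ^ ((1:ℝ)/k)))
    (hposmax : 0 < (f xk - f x₀ + 1) / (ψ xk ^ ((1:ℝ)/k))) :
    ∀ X : E,
      iteratedFDeriv ℝ 2 f xk ![X, X] ≤
        ((f xk - f x₀ + 1) / (k * ψ xk)) *
          (iteratedFDeriv ℝ 2 ψ xk ![X, X] +
            ((1 / (k:ℝ)) - 1) * (fderiv ℝ ψ xk X) ^ 2 / ψ xk) ∧
      iteratedFDeriv ℝ 2 f xk ![X, X] ≤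
        ((f xk - f x₀ + 1) / (k * ψ xk)) * iteratedFDeriv ℝ 2 ψ xk ![X, X] := by
  intro X
  have hK : (1:ℝ) ≤ (k:ℝ) := by exact_mod_cast hk
  have hKpos : (0:ℝ) < (k:ℝ) := by linarith
  set K : ℝ := (k:ℝ) with hKdef
  set a : ℝ := 1/K with hadef
  have hapos : 0 < a := by rw [hadef]; positivity
  set v0 : ℝ := ψ xk with hv0def
  have hv0 : 0 < v0 := hψpos xk
  set A : ℝ := f xk - f x₀ + 1 with hAdef
  set fv : ℝ := fderiv ℝ ψ xk X with hfvdef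
  set u'' : ℝ := iteratedFDeriv ℝ 2 f xk ![X, X] with hu''def
  set v'' : ℝ := iteratedFDeriv ℝ 2 ψ xk ![X, X] with hv''def
  set fu : ℝ := fderiv ℝ f xk X with hfudef
  have hA : 0 < A := by
    have hp : (0:ℝ) < v0 ^ a := rpow_pos_of_pos hv0 a
    by_contra hcon
    push_neg at hcon
    have : A / v0 ^ a ≤ 0 := div_nonpos_of_nonpos_of_nonneg hcon (le_of_lt hp)
    exact absurd hposmax (not_lt.2 this)
  -- the 1D functions
  have hw : ∀ t : ℝ, HasDerivAt (fun s : ℝ => f (xk + s • X) - f x₀ + 1)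
      (fderiv ℝ f (xk + t • X) X) t :=
    fun t => ((hasDerivAt_line hf xk X t).sub_const (f x₀)).add_const 1
  have hv : ∀ t : ℝ, HasDerivAt (fun s : ℝ => ψ (xk + s • X))
      (fderiv ℝ ψ (xk + t • X) X) t := hasDerivAt_line hψ xk X
  have hu' : HasDerivAt (fun s : ℝ => fderiv ℝ f (xk + s • X) X) u'' 0 :=
    hasDerivAt_line2 hf xk X
  have hv' : HasDerivAt (fun s : ℝ => fderiv ℝ ψ (xk + s • X) X) v'' 0 :=
    hasDerivAt_line2 hψ xk X
  have hγ0 : xk + (0:ℝ) • X = xk := by simp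
  -- the neighborhood where f ∘ γ - f x₀ + 1 > 0
  set s : Set ℝ := {t : ℝ | 0 < f (xk + t • X) - f x₀ + 1} with hsdef
  have hwcont : Continuous (fun t : ℝ => f (xk + t • X) - f x₀ + 1) :=
    continuous_iff_continuousAt.2 (fun t => (hw t).continuousAt)
  have hsopen : IsOpen s := isOpen_lt continuous_const hwcont
  have hs : s ∈ nhds (0:ℝ) := hsopen.mem_nhds (by
    simp only [hsdef, mem_setOf_eq, hγ0]; exact hA)
  -- log-quotient and its derivatives
  obtain ⟨h1, h2⟩ := second_deriv_test (s := s)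
    (h := fun t : ℝ => Real.log (f (xk + t • X) - f x₀ + 1)
        - a * Real.log (ψ (xk + t • X)))
    (h' := fun t : ℝ => fderiv ℝ f (xk + t • X) X / (f (xk + t • X) - f x₀ + 1)
        - a * (fderiv ℝ ψ (xk + t • X) X / ψ (xk + t • X)))
    (h'' := (u'' * (f (xk + (0:ℝ) • X) - f x₀ + 1)
            - fderiv ℝ f (xk + (0:ℝ) • X) X * fderiv ℝ f (xk + (0:ℝ) • X) X)
            / (f (xk + (0:ℝ) • X) - f x₀ + 1) ^ 2
        - a * ((v'' * ψ (xk + (0:ℝ) • X)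
            - fderiv ℝ ψ (xk + (0:ℝ) • X) X * fderiv ℝ ψ (xk + (0:ℝ) • X) X)
            / ψ (xk + (0:ℝ) • X) ^ 2))
    hs
    (fun t ht => ((hw t).log (ne_of_gt ht)).sub
      (((hv t).log (hψpos _).ne').const_mul a))
    (((hu'.div (hw 0) (by
        have : (0:ℝ) ∈ s := mem_of_mem_nhds hs
        exact ne_of_gt this))).sub
      ((hv'.div (hv 0) (hψpos _).ne').const_mul a))
    (by
      intro t ht
      have htpos : 0 < f (xk + t • X) - f x₀ + 1 := ht
      have hvp : 0 < ψ (xk + t • X) := hψpos _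
      have hmt : (f (xk + t • X) - f x₀ + 1) / (ψ (xk + t • X)) ^ a ≤ A / v0 ^ a :=
        hmax (xk + t • X)
      have hlog := Real.log_le_log (div_pos htpos (rpow_pos_of_pos hvp a)) hmt
      rw [Real.log_div (ne_of_gt htpos) (ne_of_gt (rpow_pos_of_pos hvp a)),
        Real.log_div (ne_of_gt hA) (ne_of_gt (rpow_pos_of_pos hv0 a)),
        Real.log_rpow hvp, Real.log_rpow hv0] at hlog
      simp only [hγ0]
      rw [← hAdef, ← hv0def]
      linarith)
  -- simplify the two conclusions at 0
  simp only [hγ0] at h1 h2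
  rw [← hAdef, ← hv0def, ← hfudef, ← hfvdef] at h1 h2
  -- algebra
  have e1 : fu * v0 = a * A * fv := by
    have h1' : fu / A = a * (fv / v0) := by linarith
    field_simp at h1'
    linarith
  have e2 : (u'' * A - fu * fu) * v0 ^ 2 ≤ a * (v'' * v0 - fv * fv) * A ^ 2 := by
    have h2' : (u'' * A - fu * fu) / A ^ 2 ≤ (a * (v'' * v0 - fv * fv)) / v0 ^ 2 := by
      rw [mul_div_assoc] at *
      linarith
    rwa [div_le_div_iff₀ (by positivity) (by positivity)] at h2'
  have e1sq : (fu * v0) ^ 2 = (a * A * fv) ^ 2 := by rw [e1]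
  have hpoly : u'' * (A * v0 ^ 2) ≤ a * v'' * v0 * A ^ 2 + (a ^ 2 - a) * A ^ 2 * fv ^ 2 := by
    nlinarith [e2, e1sq]
  have hdiv : u'' ≤ (a * v'' * v0 * A ^ 2 + (a ^ 2 - a) * A ^ 2 * fv ^ 2) / (A * v0 ^ 2) := by
    rw [le_div_iff₀ (by positivity)]
    exact hpoly
  have heq : (a * v'' * v0 * A ^ 2 + (a ^ 2 - a) * A ^ 2 * fv ^ 2) / (A * v0 ^ 2)
      = (A / (K * v0)) * (v'' + (1/K - 1) * fv ^ 2 / v0) := by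
    rw [hadef]
    field_simp
  have goal1 : u'' ≤ (A / (K * v0)) * (v'' + (1/K - 1) * fv ^ 2 / v0) := heq ▸ hdiv
  refine ⟨goal1, ?_⟩
  have hterm : (1/K - 1) * fv ^ 2 / v0 ≤ 0 := by
    apply div_nonpos_of_nonpos_of_nonneg _ (le_of_lt hv0)
    apply mul_nonpos_of_nonpos_of_nonneg _ (sq_nonneg fv)
    have : 1/K ≤ 1 := by rw [div_le_one hKpos]; exact hK
    linarith
  have hcoef : 0 ≤ A / (K * v0) := by positivity
  calc u'' ≤ (A / (K * v0)) * (v'' + (1/K - 1) * fv ^ 2 / v0) := goal1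
  _ ≤ (A / (K * v0)) * v'' := by
      apply mul_le_mul_of_nonneg_left _ hcoef
      linarith
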